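/- Let κ be a regular uncountable cardinal and T ⊆ ^{<κ}κ a uniformly homogeneous streamlined κ-tree. Let I be a set with at least two elements and let ⟨b_i : i ∈ I⟩ be a family of functions from κ to κ such that b_i↾γ ∈ T for every i ∈ I and γ < κ, and b_i(ε) ≠ b_j(ε) for all distinct i, j ∈ I and every ε < κ. Fix i₀ ∈ I and set T' := T ∪ {x * b_i : x ∈ T, i ∈ I∖{i₀}}. Then: (1) T' is a streamlined tree of height κ+1 that is uniformly homogeneous, and T' ∩ ^{<κ}κ = T; (2) B := {b_{i₀}↾γ : γ < κ} is a vanishing κ-branch of T'; (3) the set of limit ordinals α ≤ κ such that every node of T' of height < α belongs to some vanishing α-branch of T' equals V(T) ∪ {κ}. -/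

import Mathlib

noncomputable section

open Ordinal Set

/-- A node of a streamlined tree over `κ` is a function `s : α → κ` for an ordinal `α`;
we code it by its graph, a set of pairs `(ε, v)`. -/
abbrev PNode : Type 1 := Set (Ordinal × Ordinal)

/-- The set of ordinals in the domain of a coded node. -/
def ndom (s : PNode) : Set Ordinal := {ε | ∃ v, (ε, v) ∈ s}

/-- `s` codes a function from (the ordinals below) `α` to (the ordinals below) `ν`. -/
def IsNodeOf (ν α : Ordinal) (s : PNode) : Prop :=
  (∀ p ∈ s, p.1 < α ∧ p.2 < ν) ∧ ∀ ε, ε < α → ∃! v : Ordinal, (ε, v) ∈ s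

/-- The restriction `s ↾ α` of a node. -/
def nrestrict (s : PNode) (α : Ordinal) : PNode := {p ∈ s | p.1 < α}

/-- The node `s * t`, with domain `dom t`, agreeing with `s` on `dom s` and with `t` elsewhere. -/
def nstar (s t : PNode) : PNode :=
  {p ∈ s | p.1 ∈ ndom t} ∪ {p ∈ t | p.1 ∉ ndom s}

/-- The `α`-th level of a tree. -/
def level (T : Set PNode) (α : Ordinal) : Set PNode := {t ∈ T | ndom t = Set.Iio α}

/-- A streamlined tree: closed under restrictions. -/
def IsStreamlined (T : Set PNode) : Prop := ∀ t ∈ T, ∀ α : Ordinal, nrestrict t α ∈ T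

/-- Uniform homogeneity. -/
def UnifHomog (T : Set PNode) : Prop := ∀ s ∈ T, ∀ t ∈ T, nstar s t ∈ T

/-- Normality for a tree of height `h`. -/
def IsNormalOfHeight (T : Set PNode) (h : Ordinal) : Prop :=
  ∀ x ∈ T, ∀ α, α < h → ∃ y ∈ level T α, x ⊆ y ∨ y ⊆ x

/-- Two nodes are mutually exclusive iff they disagree everywhere on their common domain. -/
def MutExc (s t : PNode) : Prop :=
  ∀ ε v w : Ordinal, (ε, v) ∈ s → (ε, w) ∈ t → v ≠ w

/-- `s =* t` : same domain and agreement on a final segment of the domain. -/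
def EqStar (s t : PNode) : Prop :=
  ndom s = ndom t ∧ ∃ α ∈ ndom s, ∀ β, α ≤ β → ∀ v : Ordinal, ((β, v) ∈ s ↔ (β, v) ∈ t)

/-- `Δ(s,t)`: the least element of `{dom s, dom t} ∪ {δ ∈ dom s ∩ dom t ∣ s(δ) ≠ t(δ)}`. -/
def nDelta (s t : PNode) : Ordinal :=
  sInf ({δ | δ ∉ ndom s} ∪ {δ | δ ∉ ndom t} ∪
    {δ | ∃ v w : Ordinal, (δ, v) ∈ s ∧ (δ, w) ∈ t ∧ v ≠ w})

/-- `supp(f,g)` for two `θ`-sequences of nodes. -/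
def supp (θo : Ordinal) (f g : Ordinal → PNode) : Set Ordinal :=
  {τ | τ < θo ∧ (f τ ⊆ g τ ∨ g τ ⊆ f τ)}

/-- An `α`-branch of `T`. -/
def IsBranch (T : Set PNode) (α : Ordinal) (B : Set PNode) : Prop :=
  B ⊆ T ∧ (∀ x ∈ B, ∀ y ∈ B, x ⊆ y ∨ y ⊆ x) ∧
    {β : Ordinal | ∃ x ∈ B, ndom x = Set.Iio β} = Set.Iio α

/-- The set `V(T)` of vanishing levels of `T`. -/
def VSet (T : Set PNode) : Set Ordinal :=
  {α | Order.IsSuccLimit α ∧ ∀ x ∈ T, (∃ β, β < α ∧ ndom x = Set.Iio β) →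
    ∃ B, IsBranch T α B ∧ x ∈ B ∧ ⋃₀ B ∉ T}

/-- A closed set of ordinals. -/
def OrdClosed (A : Set Ordinal) : Prop :=
  ∀ α : Ordinal, Order.IsSuccLimit α → (∀ β, β < α → (A ∩ Set.Ioo β α).Nonempty) → α ∈ A

/-- A mutually exclusive `F`-ascent path (`F` given via the membership predicate `InF`)
through a tree `T` of height `γ`. -/
def MEAscentPath (θo : Ordinal) (InF : Set Ordinal → Prop) (T : Set PNode) (γ : Ordinal)
    (f : Ordinal → Ordinal → PNode) : Prop :=
  (∀ α, α < γ → ∀ τ, τ < θo → f α τ ∈ level T α) ∧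
  (∀ α β, α < β → β < γ → InF (supp θo (f α) (f β))) ∧
  (∀ α, 0 < α → α < γ → ∀ τ τ', τ < θo → τ' < θo → τ ≠ τ' → MutExc (f α τ) (f α τ'))

/-- A condition: a pair `⟨T, f⟩` together with the ordinal `η` such that `T` has height `η + 1`. -/
structure SCond : Type 1 where
  T : Set PNode
  f : Ordinal.{0} → Ordinal.{0} → PNode
  η : Ordinal.{0}

/-- Membership in the filter generated by the decreasing sequence `X` of length `ζ`. -/
def InFX (ζ : Ordinal) (X : Ordinal → Set Ordinal) (Y : Set Ordinal) : Prop :=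
  ∃ ξ, ξ < ζ ∧ X ξ ⊆ Y

/-- `p` is a condition of the forcing `𝕊^κ_𝐗`. -/
def IsSCondX (κ : Cardinal) (θo : Ordinal) (InF : Set Ordinal → Prop) (p : SCond) : Prop :=
  (∀ t ∈ p.T, ∃ α, α ≤ p.η ∧ IsNodeOf κ.ord α t) ∧
  IsStreamlined p.T ∧
  UnifHomog p.T ∧
  IsNormalOfHeight p.T (p.η + 1) ∧
  (∀ α, α ≤ p.η → (level p.T α).Nonempty) ∧
  (∀ α, α ≤ p.η → Cardinal.mk ↥(level p.T α) < Cardinal.lift.{1} κ) ∧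
  MEAscentPath θo InF p.T (p.η + 1) p.f ∧
  OrdClosed (VSet p.T) ∧
  (Order.IsSuccLimit p.η → p.η ∈ VSet p.T) ∧
  (∀ α, 0 < α → α ≤ p.η → ∀ t ∈ level p.T α, InF {τ | τ < θo ∧ MutExc t (p.f α τ)})

/-- `p ≤ q` in `𝕊^κ_𝐗` (and in `𝕊^κ_θ`): `p` end-extends `q` in both coordinates. -/
def sext (θo : Ordinal) (p q : SCond) : Prop :=
  q.η ≤ p.η ∧
  (∀ t : PNode, t ∈ q.T ↔ (t ∈ p.T ∧ ∃ α, α ≤ q.η ∧ ndom t = Set.Iio α)) ∧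
  (∀ α, α ≤ q.η → ∀ τ, τ < θo → p.f α τ = q.f α τ)

/-- Even ordinals (limit ordinals are even). -/
def EvenOrd (β : Ordinal) : Prop := ∃ γ : Ordinal, β = 2 * γ

/-- Player II has a winning strategy in the game `⅁_μ(P)`: she can choose conditions at all
even (incl. limit) stages `< μ`, only as a function of the previous moves, so that as long as
player I plays legally at odd stages, the resulting `μ`-sequence is decreasing. -/
def WinningStratII {P : Type*} (le : P → P → Prop) (μ : Ordinal) : Prop :=
  ∃ σ : (β : Ordinal) → ({γ : Ordinal // γ < β} → P) → P,
    ∀ g : Ordinal → P,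
      (∀ β, β < μ →
        (EvenOrd β → g β = σ β (fun γ => g γ.1)) ∧
        (¬ EvenOrd β → ∀ γ, γ < β → le (g β) (g γ))) →
      ∀ γ β, γ < β → β < μ → le (g β) (g γ)


/-! ### Auxiliary lemmas for statement8 -/

lemma Iio_ord_inj {α β : Ordinal} (h : Set.Iio α = Set.Iio β) : α = β := by
  have h1 := Set.ext_iff.1 h α
  have h2 := Set.ext_iff.1 h β
  simp only [Set.mem_Iio] at h1 h2
  rcases lt_trichotomy α β with hl | he | hl
  · exact absurd (h1.2 hl) (lt_irrefl α)
  · exact he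
  · exact absurd (h2.1 hl) (lt_irrefl β)

lemma mem_ndom' {s : PNode} {p : Ordinal × Ordinal} (hp : p ∈ s) : p.1 ∈ ndom s :=
  ⟨p.2, by simpa using hp⟩

lemma mem_nstar {s t : PNode} {p : Ordinal × Ordinal} :
    p ∈ nstar s t ↔ (p ∈ s ∧ p.1 ∈ ndom t) ∨ (p ∈ t ∧ p.1 ∉ ndom s) := Iff.rfl

lemma mem_nrestrict {s : PNode} {γ : Ordinal} {p : Ordinal × Ordinal} :
    p ∈ nrestrict s γ ↔ p ∈ s ∧ p.1 < γ := Iff.rfl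

lemma ndom_nstar (s t : PNode) : ndom (nstar s t) = ndom t := by
  ext ε
  constructor
  · rintro ⟨v, hv⟩
    rcases hv with ⟨hv, hd⟩ | ⟨hv, _⟩
    · exact hd
    · exact ⟨v, hv⟩
  · rintro ⟨v, hv⟩
    by_cases hεs : ε ∈ ndom s
    · obtain ⟨w, hw⟩ := hεs
      exact ⟨w, Or.inl ⟨hw, ⟨v, hv⟩⟩⟩
    · exact ⟨v, Or.inr ⟨hv, hεs⟩⟩

lemma ndom_nrestrict (s : PNode) (γ : Ordinal) :
    ndom (nrestrict s γ) = ndom s ∩ Set.Iio γ := by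
  ext ε
  exact ⟨fun ⟨v, hv, hl⟩ => ⟨⟨v, hv⟩, hl⟩, fun ⟨⟨v, hv⟩, hl⟩ => ⟨v, hv, hl⟩⟩

lemma nrestrict_nstar (s t : PNode) (γ : Ordinal) :
    nrestrict (nstar s t) γ = nstar (nrestrict s γ) (nrestrict t γ) := by
  ext ⟨ε, v⟩
  simp only [mem_nrestrict, mem_nstar, ndom_nrestrict, Set.mem_inter_iff, Set.mem_Iio]
  tauto

lemma nrestrict_subset_of_le {s : PNode} {γ γ' : Ordinal} (h : γ ≤ γ') :
    nrestrict s γ ⊆ nrestrict s γ' := fun _ hp => ⟨hp.1, lt_of_lt_of_le hp.2 h⟩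

lemma nrestrict_eq_self {s : PNode} {γ : Ordinal} (h : ndom s ⊆ Set.Iio γ) :
    nrestrict s γ = s :=
  Set.ext fun _ => ⟨fun hp => hp.1, fun hp => ⟨hp, h (mem_ndom' hp)⟩⟩

lemma nstar_eq_nrestrict {s t : PNode} {β : Ordinal} (hsub : ndom t ⊆ ndom s)
    (hdom : ndom t = Set.Iio β) : nstar s t = nrestrict s β := by
  ext p
  rw [mem_nstar, mem_nrestrict]
  constructor
  · rintro (⟨hp, hd⟩ | ⟨hp, hd⟩)
    · rw [hdom] at hd
      exact ⟨hp, hd⟩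
    · exact absurd (hsub (mem_ndom' hp)) hd
  · rintro ⟨hp, hl⟩
    refine Or.inl ⟨hp, ?_⟩
    rw [hdom]
    exact hl

lemma nstar_nstar {s x t : PNode} {γ : Ordinal} (hs : ndom s ⊆ Set.Iio γ)
    (hx : ndom x ⊆ Set.Iio γ) :
    nstar s (nstar x t) = nstar (nstar s (nrestrict (nstar x t) γ)) t := by
  ext ⟨ε, v⟩
  have hms : (ε, v) ∈ s → ε ∈ ndom s := fun h => ⟨v, h⟩
  have hmx : (ε, v) ∈ x → ε ∈ ndom x := fun h => ⟨v, h⟩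
  have hmt : (ε, v) ∈ t → ε ∈ ndom t := fun h => ⟨v, h⟩
  have hs' : ε ∈ ndom s → ε < γ := fun h => hs h
  have hx' : ε ∈ ndom x → ε < γ := fun h => hx h
  simp only [mem_nstar, mem_nrestrict, ndom_nstar, ndom_nrestrict, Set.mem_inter_iff,
    Set.mem_Iio]
  tauto

lemma nstar_of_ndom_empty {s t : PNode} (h : ndom s = ∅) : nstar s t = t := by
  ext p
  rw [mem_nstar]
  constructor
  · rintro (⟨hp, _⟩ | ⟨hp, _⟩)
    · exact absurd (mem_ndom' hp) (by simp [h])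
    · exact hp
  · intro hp
    exact Or.inr ⟨hp, by simp [h]⟩

lemma sUnion_nrestrict {u : PNode} {o : Ordinal} (ho : Order.IsSuccLimit o) (hu : ndom u ⊆ Set.Iio o) :
    ⋃₀ {y : PNode | ∃ γ, γ < o ∧ y = nrestrict u γ} = u := by
  ext p
  rw [Set.mem_sUnion]
  constructor
  · rintro ⟨y, ⟨γ, _, rfl⟩, hp⟩
    exact hp.1
  · intro hp
    have h1 : p.1 < o := hu (mem_ndom' hp)
    exact ⟨nrestrict u (Order.succ p.1), ⟨Order.succ p.1, ho.succ_lt h1, rfl⟩,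
      hp, Order.lt_succ p.1⟩

lemma branch_restricts {TT : Set PNode} {u : PNode} {o : Ordinal}
    (hu : ndom u = Set.Iio o)
    (hmem : ∀ γ, γ < o → nrestrict u γ ∈ TT) :
    IsBranch TT o {y : PNode | ∃ γ, γ < o ∧ y = nrestrict u γ} := by
  refine ⟨?_, ?_, ?_⟩
  · rintro y ⟨γ, hγ, rfl⟩
    exact hmem γ hγ
  · rintro y ⟨γ, hγ, rfl⟩ y' ⟨γ', hγ', rfl⟩
    rcases le_total γ γ' with h | h
    · exact Or.inl (nrestrict_subset_of_le h)
    · exact Or.inr (nrestrict_subset_of_le h)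
  · ext β
    simp only [Set.mem_setOf_eq, Set.mem_Iio]
    constructor
    · rintro ⟨y, ⟨γ, hγ, rfl⟩, hd⟩
      have hh : ndom (nrestrict u γ) = Set.Iio γ := by
        rw [ndom_nrestrict, hu, Set.inter_eq_self_of_subset_right (Set.Iio_subset_Iio hγ.le)]
      rw [hh] at hd
      exact (Iio_ord_inj hd) ▸ hγ
    · intro hβ
      refine ⟨nrestrict u β, ⟨β, hβ, rfl⟩, ?_⟩
      rw [ndom_nrestrict, hu, Set.inter_eq_self_of_subset_right (Set.Iio_subset_Iio hβ.le)]

/-- adjoining all branches `b_i` (`i ≠ i₀`) of a mutually exclusive family of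
cofinal branches to a uniformly homogeneous streamlined `κ`-tree yields a uniformly
homogeneous streamlined tree of height `κ + 1` in which `b_{i₀}` determines a vanishing
`κ`-branch, and whose set of vanishing levels is `V(T) ∪ {κ}`. -/
theorem statement8
    (κ : Cardinal) (hκreg : κ.IsRegular) (hκunc : Cardinal.aleph0 < κ)
    (T : Set PNode)
    (hnodes : ∀ t ∈ T, ∃ α, α < κ.ord ∧ IsNodeOf κ.ord α t)
    (hstream : IsStreamlined T)
    (hlevne : ∀ α, α < κ.ord → (level T α).Nonempty)
    (hlevsm : ∀ α, α < κ.ord → Cardinal.mk ↥(level T α) < Cardinal.lift.{1} κ)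
    (hhom : UnifHomog T)
    {ι : Type} (hι : ∃ i j : ι, i ≠ j)
    (b : ι → PNode)
    (hb : ∀ i, IsNodeOf κ.ord κ.ord (b i))
    (hbT : ∀ i, ∀ γ, γ < κ.ord → nrestrict (b i) γ ∈ T)
    (hbdist : ∀ i j, i ≠ j → ∀ ε, ε < κ.ord → ∀ v w : Ordinal,
      (ε, v) ∈ b i → (ε, w) ∈ b j → v ≠ w)
    (i₀ : ι)
    (T' : Set PNode)
    (hT' : T' = T ∪ {y | ∃ x ∈ T, ∃ i, i ≠ i₀ ∧ y = nstar x (b i)}) :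
    (IsStreamlined T' ∧ UnifHomog T' ∧
      (∀ α, α ≤ κ.ord → (level T' α).Nonempty) ∧
      (∀ α, κ.ord < α → level T' α = ∅) ∧
      {t ∈ T' | ∃ α, α < κ.ord ∧ ndom t = Set.Iio α} = T) ∧
    (IsBranch T' κ.ord {y | ∃ γ, γ < κ.ord ∧ y = nrestrict (b i₀) γ} ∧
      ⋃₀ {y : PNode | ∃ γ, γ < κ.ord ∧ y = nrestrict (b i₀) γ} ∉ T') ∧
    ({α ∈ VSet T' | α ≤ κ.ord} = (VSet T ∩ Set.Iic κ.ord) ∪ {κ.ord}) := by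
  have hκlim : Order.IsSuccLimit (Cardinal.ord κ) := Cardinal.isSuccLimit_ord hκunc.le
  have hTsub : T ⊆ T' := by rw [hT']; exact Set.subset_union_left
  have hT'mem : ∀ y : PNode,
      y ∈ T' ↔ y ∈ T ∨ ∃ x, x ∈ T ∧ ∃ i, i ≠ i₀ ∧ y = nstar x (b i) := by
    intro y; rw [hT']; simp only [Set.mem_union, Set.mem_setOf_eq]
  have hTdom : ∀ t ∈ T, ∃ β, β < Cardinal.ord κ ∧ ndom t = Set.Iio β := by
    intro t ht
    obtain ⟨β, hβ, h1, h2⟩ := hnodes t ht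
    refine ⟨β, hβ, ?_⟩
    ext ε
    constructor
    · rintro ⟨v, hv⟩; exact (h1 _ hv).1
    · intro hε; exact (h2 ε hε).exists
  have hbdom : ∀ i, ndom (b i) = Set.Iio (Cardinal.ord κ) := by
    intro i
    obtain ⟨h1, h2⟩ := hb i
    ext ε
    constructor
    · rintro ⟨v, hv⟩; exact (h1 _ hv).1
    · intro hε; exact (h2 ε hε).exists
  have hmemT_of : ∀ y ∈ T', ∀ β, β < Cardinal.ord κ → ndom y = Set.Iio β → y ∈ T := by
    intro y hy β hβ hd
    rcases (hT'mem y).1 hy with h | ⟨x, hx, i, hi, rfl⟩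
    · exact h
    · exfalso
      rw [ndom_nstar, hbdom i] at hd
      exact absurd (Iio_ord_inj hd ▸ hβ) (lt_irrefl _)
  have hT'dom : ∀ y ∈ T', ∃ β, β ≤ Cardinal.ord κ ∧ ndom y = Set.Iio β := by
    intro y hy
    rcases (hT'mem y).1 hy with h | ⟨x, hx, i, hi, rfl⟩
    · obtain ⟨β, hβ, hd⟩ := hTdom y h; exact ⟨β, hβ.le, hd⟩
    · exact ⟨_, le_rfl, by rw [ndom_nstar, hbdom i]⟩
  have hwT : ∀ x ∈ T, ∀ (i : ι), ∀ γ, γ < Cardinal.ord κ →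
      nrestrict (nstar x (b i)) γ ∈ T := by
    intro x hx i γ hγ
    rw [nrestrict_nstar]
    exact hhom _ (hstream x hx γ) _ (hbT i γ hγ)
  have hstream' : IsStreamlined T' := by
    intro y hy γ
    rcases (hT'mem y).1 hy with h | ⟨x, hx, i, hi, rfl⟩
    · exact hTsub (hstream y h γ)
    · rcases lt_or_ge γ (Cardinal.ord κ) with hγ | hγ
      · exact hTsub (hwT x hx i γ hγ)
      · rw [nrestrict_eq_self (by rw [ndom_nstar, hbdom i]; exact Set.Iio_subset_Iio hγ)]
        exact hy
  have hhom' : UnifHomog T' := by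
    intro s hs t ht
    rcases (hT'mem t).1 ht with htT | ⟨x, hx, i, hi, rfl⟩
    · obtain ⟨β, hβ, hdt⟩ := hTdom t htT
      rcases (hT'mem s).1 hs with hsT | ⟨x', hx', i', hi', rfl⟩
      · exact hTsub (hhom s hsT t htT)
      · have hds : ndom (nstar x' (b i')) = Set.Iio (Cardinal.ord κ) := by
          rw [ndom_nstar, hbdom i']
        have hsub : ndom t ⊆ ndom (nstar x' (b i')) := by
          rw [hdt, hds]; exact Set.Iio_subset_Iio hβ.le
        rw [nstar_eq_nrestrict hsub hdt]
        exact hstream' _ hs β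
    · rcases (hT'mem s).1 hs with hsT | ⟨x', hx', i', hi', rfl⟩
      · obtain ⟨βs, hβs, hds⟩ := hTdom s hsT
        obtain ⟨βx, hβx, hdx⟩ := hTdom x hx
        have hγ : max βs βx < Cardinal.ord κ := max_lt hβs hβx
        have h1 : ndom s ⊆ Set.Iio (max βs βx) := by
          rw [hds]; exact Set.Iio_subset_Iio (le_max_left _ _)
        have h2 : ndom x ⊆ Set.Iio (max βs βx) := by
          rw [hdx]; exact Set.Iio_subset_Iio (le_max_right _ _)
        rw [nstar_nstar h1 h2]
        exact (hT'mem _).2 (Or.inr ⟨_, hhom _ hsT _ (hwT x hx i _ hγ), i, hi, rfl⟩)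
      · have hds : ndom (nstar x' (b i')) = Set.Iio (Cardinal.ord κ) := by
          rw [ndom_nstar, hbdom i']
        have hdt : ndom (nstar x (b i)) = Set.Iio (Cardinal.ord κ) := by
          rw [ndom_nstar, hbdom i]
        rw [nstar_eq_nrestrict (hdt.trans hds.symm).subset hdt, nrestrict_eq_self hds.subset]
        exact hs
  have hlev' : ∀ α, α ≤ Cardinal.ord κ → (level T' α).Nonempty := by
    intro α hα
    rcases lt_or_eq_of_le hα with hlt | rfl
    · obtain ⟨t, htT, hdt⟩ := hlevne α hlt
      exact ⟨t, hTsub htT, hdt⟩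
    · obtain ⟨i, j, hij⟩ := hι
      have hex : ∃ i' : ι, i' ≠ i₀ := by
        by_cases h : i = i₀
        · exact ⟨j, fun hj => hij (h.trans hj.symm)⟩
        · exact ⟨i, h⟩
      obtain ⟨i', hi'⟩ := hex
      obtain ⟨t0, ht0T, _⟩ := hlevne 0 hκlim.pos
      exact ⟨nstar t0 (b i'), (hT'mem _).2 (Or.inr ⟨t0, ht0T, i', hi', rfl⟩),
        by rw [ndom_nstar, hbdom i']⟩
  have hlevempty : ∀ α, Cardinal.ord κ < α → level T' α = ∅ := by
    intro α hα
    ext y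
    simp only [level, Set.mem_sep_iff, Set.mem_empty_iff_false, iff_false, not_and]
    intro hy hd
    obtain ⟨β, hβ, hdy⟩ := hT'dom y hy
    exact (hβ.trans_lt hα).ne (Iio_ord_inj (hdy.symm.trans hd))
  have htrace : {t ∈ T' | ∃ α, α < Cardinal.ord κ ∧ ndom t = Set.Iio α} = T := by
    ext t
    constructor
    · rintro ⟨ht, β, hβ, hd⟩
      exact hmemT_of t ht β hβ hd
    · intro ht
      exact ⟨hTsub ht, hTdom t ht⟩
  have hIio0 : Set.Iio (0 : Ordinal) = ∅ := by ext ε; simp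
  have hstar_ne : ∀ (i j : ι), i ≠ j → ∀ x x' : PNode,
      (∃ β, β < Cardinal.ord κ ∧ ndom x = Set.Iio β) →
      (∃ β, β < Cardinal.ord κ ∧ ndom x' = Set.Iio β) →
      nstar x (b i) ≠ nstar x' (b j) := by
    rintro i j hij x x' ⟨β, hβ, hdx⟩ ⟨β', hβ', hdx'⟩ heq
    have hεκ : max β β' < Cardinal.ord κ := max_lt hβ hβ'
    obtain ⟨v, hv, -⟩ := (hb i).2 (max β β') hεκ
    have hεx : max β β' ∉ ndom x := by
      rw [hdx, Set.mem_Iio]; exact not_lt.2 (le_max_left _ _)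
    have hεx' : max β β' ∉ ndom x' := by
      rw [hdx', Set.mem_Iio]; exact not_lt.2 (le_max_right _ _)
    have hmem : ((max β β', v) : Ordinal × Ordinal) ∈ nstar x (b i) :=
      mem_nstar.2 (Or.inr ⟨hv, hεx⟩)
    rw [heq] at hmem
    rcases mem_nstar.1 hmem with ⟨hm, -⟩ | ⟨hm, -⟩
    · exact hεx' (mem_ndom' hm)
    · exact hbdist i j hij (max β β') hεκ v v hv hm rfl
  have hstar_not : ∀ x : PNode, (∃ β, β < Cardinal.ord κ ∧ ndom x = Set.Iio β) →
      nstar x (b i₀) ∉ T' := by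
    rintro x hdx hmem
    rcases (hT'mem _).1 hmem with h | ⟨x', hx', i, hi, heq⟩
    · obtain ⟨β, hβ, hd⟩ := hTdom _ h
      rw [ndom_nstar, hbdom i₀] at hd
      exact hβ.ne' (Iio_ord_inj hd)
    · exact hstar_ne i₀ i (Ne.symm hi) x x' hdx (hTdom x' hx') heq
  have hbnot : b i₀ ∉ T' := by
    have hd0 : ndom (nrestrict (b i₀) 0) = Set.Iio 0 := by
      rw [ndom_nrestrict, hIio0, Set.inter_empty]
    have heq : nstar (nrestrict (b i₀) 0) (b i₀) = b i₀ :=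
      nstar_of_ndom_empty (by rw [hd0, hIio0])
    intro h
    exact hstar_not (nrestrict (b i₀) 0) ⟨0, hκlim.pos, hd0⟩ (heq.symm ▸ h)
  have hbranch : IsBranch T' (Cardinal.ord κ)
      {y | ∃ γ, γ < Cardinal.ord κ ∧ y = nrestrict (b i₀) γ} :=
    branch_restricts (hbdom i₀) (fun γ hγ => hTsub (hbT i₀ γ hγ))
  have hvanish2 : ⋃₀ {y : PNode | ∃ γ, γ < Cardinal.ord κ ∧ y = nrestrict (b i₀) γ} ∉ T' := by
    rw [sUnion_nrestrict hκlim (hbdom i₀).subset]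
    exact hbnot
  have hκV : Cardinal.ord κ ∈ VSet T' := by
    refine ⟨hκlim, ?_⟩
    intro x hx hex
    obtain ⟨β, hβ, hdx⟩ := hex
    have hxT : x ∈ T := hmemT_of x hx β hβ hdx
    have hdu : ndom (nstar x (b i₀)) = Set.Iio (Cardinal.ord κ) := by
      rw [ndom_nstar, hbdom i₀]
    refine ⟨{y | ∃ γ, γ < Cardinal.ord κ ∧ y = nrestrict (nstar x (b i₀)) γ}, ?_, ?_, ?_⟩
    · exact branch_restricts hdu (fun γ hγ => hTsub (hwT x hxT i₀ γ hγ))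
    · refine ⟨β, hβ, ?_⟩
      have h1 : ndom (nrestrict (b i₀) β) = Set.Iio β := by
        rw [ndom_nrestrict, hbdom i₀,
          Set.inter_eq_self_of_subset_right (Set.Iio_subset_Iio hβ.le)]
      rw [nrestrict_nstar, nrestrict_eq_self hdx.subset,
        nstar_eq_nrestrict (h1.trans hdx.symm).subset h1, nrestrict_eq_self hdx.subset]
    · rw [sUnion_nrestrict hκlim hdu.subset]
      exact hstar_not x ⟨β, hβ, hdx⟩
  refine ⟨⟨hstream', hhom', hlev', hlevempty, htrace⟩, ⟨hbranch, hvanish2⟩, ?_⟩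
  ext α
  simp only [Set.mem_sep_iff, Set.mem_union, Set.mem_inter_iff, Set.mem_Iic,
    Set.mem_singleton_iff, Set.mem_setOf_eq]
  constructor
  · rintro ⟨⟨hlim, hV⟩, hle⟩
    rcases lt_or_eq_of_le hle with hlt | rfl
    · left
      refine ⟨⟨hlim, ?_⟩, hle⟩
      intro x hxT hex
      obtain ⟨B, hB, hxB, hnot⟩ := hV x (hTsub hxT) hex
      have hBT : B ⊆ T := by
        intro y hy
        obtain ⟨βy, hβy, hdy⟩ := hT'dom y (hB.1 hy)
        have hmem : βy ∈ Set.Iio α := by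
          rw [← hB.2.2]
          exact ⟨y, hy, hdy⟩
        rw [Set.mem_Iio] at hmem
        exact hmemT_of y (hB.1 hy) βy (hmem.trans hlt) hdy
      exact ⟨B, ⟨hBT, hB.2.1, hB.2.2⟩, hxB, fun h => hnot (hTsub h)⟩
    · right; rfl
  · rintro (⟨⟨hlim, hV⟩, hle⟩ | rfl)
    · rcases lt_or_eq_of_le hle with hlt | rfl
      · refine ⟨⟨hlim, ?_⟩, hle⟩
        intro x hxT' hex
        obtain ⟨β, hβ, hdx⟩ := hex
        have hxT : x ∈ T := hmemT_of x hxT' β (hβ.trans hlt) hdx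
        obtain ⟨B, hB, hxB, hnot⟩ := hV x hxT ⟨β, hβ, hdx⟩
        refine ⟨B, ⟨hB.1.trans hTsub, hB.2.1, hB.2.2⟩, hxB, ?_⟩
        intro hU
        rcases (hT'mem _).1 hU with h | ⟨x', hx', i, hi, heq⟩
        · exact hnot h
        · have hαd : α ∈ ndom (⋃₀ B) := by
            rw [heq, ndom_nstar, hbdom i]
            exact hlt
          obtain ⟨v, hv⟩ := hαd
          obtain ⟨y, hyB, hpy⟩ := Set.mem_sUnion.1 hv
          obtain ⟨βy, hβy, hdy⟩ := hTdom y (hB.1 hyB)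
          have h1 : βy ∈ Set.Iio α := by
            rw [← hB.2.2]
            exact ⟨y, hyB, hdy⟩
          have h2 : α ∈ ndom y := ⟨v, hpy⟩
          rw [hdy, Set.mem_Iio] at h2
          rw [Set.mem_Iio] at h1
          exact absurd (h2.trans h1) (lt_irrefl α)
      · exact ⟨hκV, le_rfl⟩
    · exact ⟨hκV, le_rfl⟩
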